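/- If a : [0,T] → ℝ is nonnegative and nondecreasing, q > 0, and g ≥ 0 is a constant, then a(t) + ∫₀ᵗ Σ_{n=1}^∞ (gΓ(q))ⁿ/Γ(nq)·(t−s)^{nq−1} a(s) ds ≤ a(t)·E_q(gΓ(q)t^q) for all t ∈ [0,T]. -/

import Mathlib

open Set Real MeasureTheory
open scoped Nat

-- Step 1: Gamma lower bound on [1, ∞)
lemma exp_neg_two_le_Gamma {x : ℝ} (hx : 1 ≤ x) : Real.exp (-2) ≤ Real.Gamma x := by
  have hx0 : 0 < x := lt_of_lt_of_le one_pos hx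
  rw [Real.Gamma_eq_integral hx0]
  have hInt : IntegrableOn (fun u : ℝ => Real.exp (-u) * u ^ (x - 1)) (Ioi 0) :=
    Real.GammaIntegral_convergent hx0
  have hsub : Ioc (1:ℝ) 2 ⊆ Ioi 0 := fun u hu => lt_trans one_pos hu.1
  have h1 : Real.exp (-2) ≤ ∫ u in Ioc (1:ℝ) 2, Real.exp (-u) * u ^ (x - 1) := by
    have hconst : ∫ u in Ioc (1:ℝ) 2, Real.exp (-2) = Real.exp (-2) := by
      rw [setIntegral_const]
      simp [Real.volume_Ioc]
      norm_num
    rw [← hconst]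
    apply setIntegral_mono_on
    · exact integrableOn_const (measure_Ioc_lt_top).ne
    · exact hInt.mono_set hsub
    · exact measurableSet_Ioc
    · intro u hu
      have hu1 : (1:ℝ) ≤ u := le_of_lt hu.1
      have h2 : Real.exp (-u) ≥ Real.exp (-2) := Real.exp_le_exp.mpr (by linarith [hu.2]) 
      have h3 : (1:ℝ) ≤ u ^ (x - 1) := Real.one_le_rpow hu1 (by linarith)
      calc Real.exp (-2) = Real.exp (-2) * 1 := by ring
        _ ≤ Real.exp (-u) * u ^ (x - 1) := by
            apply mul_le_mul h2 h3 zero_le_one (le_of_lt (Real.exp_pos _))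
  refine h1.trans ?_
  apply setIntegral_mono_set hInt
  · filter_upwards [ae_restrict_mem measurableSet_Ioi] with u hu
    exact mul_nonneg (Real.exp_pos _).le (Real.rpow_nonneg (le_of_lt hu) _)
  · exact Filter.Eventually.of_forall hsub

-- Step 2: Gamma(x + n) ≥ n! * e⁻²
lemma factorial_exp_le_Gamma {x : ℝ} (hx : 1 ≤ x) (n : ℕ) :
    (n ! : ℝ) * Real.exp (-2) ≤ Real.Gamma (x + n) := by
  induction n with
  | zero => simpa using exp_neg_two_le_Gamma hx
  | succ n ih =>
      have hn0 : (0:ℝ) ≤ (n:ℝ) := Nat.cast_nonneg n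
      have hxn0 : (0:ℝ) < x + n := by linarith
      have hG : Real.Gamma (x + ((n:ℕ)+1 : ℕ)) = (x + n) * Real.Gamma (x + n) := by
        push_cast
        rw [show x + ((n:ℝ) + 1) = (x + (n:ℝ)) + 1 by ring, Real.Gamma_add_one (ne_of_gt hxn0)]
      rw [hG]
      calc (((n+1)! : ℕ) : ℝ) * Real.exp (-2)
          = ((n:ℝ) + 1) * ((n ! : ℝ) * Real.exp (-2)) := by
            rw [Nat.factorial_succ]; push_cast; ring
        _ ≤ (x + n) * Real.Gamma (x + n) :=
            mul_le_mul (by linarith) ih (by positivity) hxn0.le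

-- Step 3: Gamma(y+1) ≥ ⌊y⌋! e⁻²
lemma floor_factorial_exp_le_Gamma {y : ℝ} (hy : 0 ≤ y) :
    ((Nat.floor y)! : ℝ) * Real.exp (-2) ≤ Real.Gamma (y + 1) := by
  have hfl : (Nat.floor y : ℝ) ≤ y := Nat.floor_le hy
  have hfl2 : y < Nat.floor y + 1 := Nat.lt_floor_add_one y
  have hx : (1:ℝ) ≤ y + 1 - Nat.floor y := by linarith
  have := factorial_exp_le_Gamma hx (Nat.floor y)
  rwa [show y + 1 - (Nat.floor y : ℝ) + (Nat.floor y : ℝ) = y + 1 by ring] at this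

-- Step 4: geometric bound on Mittag-Leffler terms
lemma ml_term_le (q z : ℝ) (hq : 0 < q) (hz : 0 ≤ z) :
    ∃ C r : ℝ, 0 ≤ C ∧ 0 ≤ r ∧ r < 1 ∧
      ∀ k : ℕ, z ^ k / Real.Gamma (k * q + 1) ≤ C * r ^ k := by
  set R : ℝ := max 1 ((z + 1) ^ (1 / q)) with hR
  have hR1 : (1:ℝ) ≤ R := le_max_left _ _
  have hR0 : (0:ℝ) < R := lt_of_lt_of_le one_pos hR1
  have hRq : z + 1 ≤ R ^ q := by
    have h1 : ((z + 1) ^ (1 / q)) ^ q ≤ R ^ q :=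
      Real.rpow_le_rpow (Real.rpow_nonneg (by linarith) _) (le_max_right _ _) hq.le
    rwa [← Real.rpow_mul (by linarith : (0:ℝ) ≤ z + 1), one_div_mul_cancel hq.ne',
      Real.rpow_one] at h1
  have hRqpos : 0 < R ^ q := Real.rpow_pos_of_pos hR0 q
  refine ⟨R * Real.exp R * Real.exp 2, z / R ^ q, by positivity, by positivity,
    (div_lt_one hRqpos).mpr (by linarith), fun k => ?_⟩
  have hkq : (0:ℝ) ≤ k * q := by positivity
  set m : ℕ := Nat.floor ((k:ℝ) * q) with hm
  have hg1 : (m ! : ℝ) * Real.exp (-2) ≤ Real.Gamma (k * q + 1) :=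
    floor_factorial_exp_le_Gamma hkq
  have hfact : R ^ m ≤ (m ! : ℝ) * Real.exp R := by
    have h := Real.sum_le_exp_of_nonneg hR0.le (m + 1)
    have h2 : R ^ m / (m ! : ℝ) ≤ Real.exp R := by
      refine le_trans ?_ h
      exact Finset.single_le_sum (f := fun i => R ^ i / (i ! : ℝ))
        (fun i _ => by positivity) (Finset.self_mem_range_succ _)
    calc R ^ m = (R ^ m / (m ! : ℝ)) * (m ! : ℝ) := by field_simp
      _ ≤ Real.exp R * (m ! : ℝ) := mul_le_mul_of_nonneg_right h2 (by positivity)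
      _ = (m ! : ℝ) * Real.exp R := by ring
  have hpow : (R ^ q) ^ k / R ≤ R ^ m := by
    have h1 : (R ^ q) ^ k / R = R ^ ((k:ℝ) * q - 1) := by
      rw [← Real.rpow_natCast (R ^ q) k, ← Real.rpow_mul hR0.le,
        Real.rpow_sub hR0, Real.rpow_one, mul_comm q (k:ℝ)]
    have h2 : R ^ ((k:ℝ) * q - 1) ≤ R ^ ((m : ℝ)) := by
      apply Real.rpow_le_rpow_of_exponent_le hR1
      have := Nat.lt_floor_add_one ((k:ℝ) * q)
      rw [hm]
      linarith
    rw [h1]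
    exact h2.trans_eq (Real.rpow_natCast R m)
  have hmain : (R ^ q) ^ k / (R * Real.exp R) ≤ (m ! : ℝ) := by
    rw [div_le_iff₀ (by positivity)]
    calc (R ^ q) ^ k ≤ R ^ m * R := (div_le_iff₀ hR0).mp hpow
      _ ≤ ((m ! : ℝ) * Real.exp R) * R := mul_le_mul_of_nonneg_right hfact hR0.le
      _ = (m ! : ℝ) * (R * Real.exp R) := by ring
  have hGamma_lb : Real.exp (-2) * ((R ^ q) ^ k / (R * Real.exp R)) ≤ Real.Gamma (k * q + 1) := by
    refine le_trans ?_ hg1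
    calc Real.exp (-2) * ((R ^ q) ^ k / (R * Real.exp R))
        ≤ Real.exp (-2) * (m ! : ℝ) := mul_le_mul_of_nonneg_left hmain (Real.exp_pos _).le
      _ = (m ! : ℝ) * Real.exp (-2) := by ring
  have hlb_pos : 0 < Real.exp (-2) * ((R ^ q) ^ k / (R * Real.exp R)) := by positivity
  calc z ^ k / Real.Gamma (k * q + 1)
      ≤ z ^ k / (Real.exp (-2) * ((R ^ q) ^ k / (R * Real.exp R))) := by
        gcongr
    _ = (R * Real.exp R * Real.exp 2) * (z / R ^ q) ^ k := by
        rw [div_pow, Real.exp_neg]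
        field_simp

lemma summable_ml (q z : ℝ) (hq : 0 < q) (hz : 0 ≤ z) :
    Summable (fun k : ℕ => z ^ k / Real.Gamma (k * q + 1)) := by
  obtain ⟨C, r, hC, hr0, hr1, hb⟩ := ml_term_le q z hq hz
  refine Summable.of_nonneg_of_le (fun k => ?_) hb
    ((summable_geometric_of_lt_one hr0 hr1).mul_left C)
  have hΓ : 0 < Real.Gamma (k * q + 1) := Real.Gamma_pos_of_pos (by positivity)
  positivity

noncomputable def mittagLeffler (q z : ℝ) : ℝ :=
  ∑' k : ℕ, z ^ k / Real.Gamma (k * q + 1)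

/-- Bounding the Gronwall series by the Mittag-Leffler function when `a` is nondecreasing. -/
theorem series_le_mittagLeffler
    (T q g : ℝ) (hq : 0 < q) (hg : 0 ≤ g)
    (a : ℝ → ℝ)
    (ha_nonneg : ∀ t ∈ Icc (0:ℝ) T, 0 ≤ a t)
    (ha_mono : MonotoneOn a (Icc (0:ℝ) T)) :
    ∀ t ∈ Icc (0:ℝ) T,
      a t + (∫ s in (0:ℝ)..t,
          ∑' n : ℕ, (g * Real.Gamma q) ^ (n + 1) / Real.Gamma ((n + 1) * q)
            * (t - s) ^ ((n + 1 : ℕ) * q - 1) * a s)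
        ≤ a t * mittagLeffler q (g * Real.Gamma q * t ^ q) := by
  intro t ht
  obtain ⟨ht0, htT⟩ := ht
  set w := g * Real.Gamma q with hw
  have hw0 : 0 ≤ w := mul_nonneg hg (Real.Gamma_pos_of_pos hq).le
  set y := w * t ^ q with hy
  have hty : 0 ≤ t ^ q := Real.rpow_nonneg ht0 q
  have hy0 : 0 ≤ y := mul_nonneg hw0 hty
  have hat : 0 ≤ a t := ha_nonneg t ⟨ht0, htT⟩
  have hp : ∀ n : ℕ, 0 < ((n:ℝ) + 1) * q := fun n => by positivity
  have hΓp : ∀ n : ℕ, 0 < Real.Gamma (((n:ℝ) + 1) * q) := fun n => Real.Gamma_pos_of_pos (hp n)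
  -- nonnegativity of V terms
  have hΓp1 : ∀ n : ℕ, 0 < Real.Gamma (((n:ℝ) + 1) * q + 1) :=
    fun n => Real.Gamma_pos_of_pos (by have := hp n; linarith)
  have hVnn : ∀ n : ℕ, 0 ≤ a t * (y ^ (n + 1) / Real.Gamma (((n:ℝ) + 1) * q + 1)) := by
    intro n
    have := hΓp1 n
    positivity
  -- summability
  have hsum : Summable (fun k : ℕ => y ^ k / Real.Gamma (k * q + 1)) := summable_ml q y hq hy0
  have hsum1 : Summable (fun n : ℕ => y ^ (n + 1) / Real.Gamma (((n:ℝ) + 1) * q + 1)) := by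
    refine ((summable_nat_add_iff 1).mpr hsum).congr fun n => ?_
    push_cast
    ring_nf
  have hVsum : Summable (fun n : ℕ =>
      a t * (y ^ (n + 1) / Real.Gamma (((n:ℝ) + 1) * q + 1))) := hsum1.mul_left _
  -- the key integral bound
  have hsubT : Ioc (0:ℝ) t ⊆ Icc 0 T := fun s hs => ⟨hs.1.le, hs.2.trans htT⟩
  have hmem := ae_restrict_mem (μ := volume) (s := Ioc (0:ℝ) t) measurableSet_Ioc
  have hFterm_nn : ∀ s ∈ Ioc (0:ℝ) t, ∀ n : ℕ,
      0 ≤ w ^ (n + 1) / Real.Gamma (((n:ℝ) + 1) * q) * (t - s) ^ (((n + 1 : ℕ) : ℝ) * q - 1) * a s := by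
    intro s hs n
    exact mul_nonneg (mul_nonneg (div_nonneg (pow_nonneg hw0 _) (hΓp n).le)
      (Real.rpow_nonneg (by linarith [hs.2]) _)) (ha_nonneg s (hsubT hs))
  -- per-term integrability of G n
  have hGint : ∀ n : ℕ, IntegrableOn
      (fun s => w ^ (n + 1) / Real.Gamma (((n:ℝ) + 1) * q) * (t - s) ^ (((n + 1 : ℕ) : ℝ) * q - 1) * a t)
      (Ioc 0 t) volume := by
    intro n
    have hrint : IntervalIntegrable (fun u : ℝ => u ^ (((n + 1 : ℕ) : ℝ) * q - 1)) volume 0 t :=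
      intervalIntegral.intervalIntegrable_rpow' (by push_cast; nlinarith [hp n])
    have h2 := hrint.comp_sub_left t
    simp only [sub_self, sub_zero] at h2
    exact ((h2.const_mul (w ^ (n + 1) / Real.Gamma (((n:ℝ) + 1) * q))).mul_const (a t)).2
  -- per-term integral value
  have hGval : ∀ n : ℕ,
      (∫ s in Ioc (0:ℝ) t, w ^ (n + 1) / Real.Gamma (((n:ℝ) + 1) * q)
          * (t - s) ^ (((n + 1 : ℕ) : ℝ) * q - 1) * a t)
        = a t * (y ^ (n + 1) / Real.Gamma (((n:ℝ) + 1) * q + 1)) := by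
    intro n
    rw [← intervalIntegral.integral_of_le ht0]
    have hsub : (∫ s in (0:ℝ)..t, (t - s) ^ (((n + 1 : ℕ) : ℝ) * q - 1))
        = t ^ (((n:ℝ) + 1) * q) / (((n:ℝ) + 1) * q) := by
      have hcomp := intervalIntegral.integral_comp_sub_left
        (fun u : ℝ => u ^ (((n + 1 : ℕ) : ℝ) * q - 1)) t (a := 0) (b := t)
      simp only [sub_self, sub_zero] at hcomp
      rw [hcomp, integral_rpow (Or.inl (by push_cast; nlinarith [hp n]))]
      have he : ((n + 1 : ℕ) : ℝ) * q - 1 + 1 = ((n:ℝ) + 1) * q := by push_cast; ring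
      rw [he, Real.zero_rpow (hp n).ne', sub_zero]
    rw [intervalIntegral.integral_mul_const, intervalIntegral.integral_const_mul, hsub]
    -- algebra
    have hΓrec : Real.Gamma (((n:ℝ) + 1) * q + 1)
        = (((n:ℝ) + 1) * q) * Real.Gamma (((n:ℝ) + 1) * q) := Real.Gamma_add_one (hp n).ne'
    have htP : t ^ (((n:ℝ) + 1) * q) = (t ^ q) ^ (n + 1) := by
      rw [mul_comm, Real.rpow_mul ht0]
      rw [← Real.rpow_natCast (t ^ q) (n + 1)]
      push_cast
      ring_nf
    rw [hy, mul_pow, htP, hΓrec]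
    have h1 := (hp n).ne'
    have h2 := (hΓp n).ne'
    field_simp
    ring
  have key : (∫ s in (0:ℝ)..t,
      ∑' n : ℕ, w ^ (n + 1) / Real.Gamma (((n:ℝ) + 1) * q)
        * (t - s) ^ (((n + 1 : ℕ) : ℝ) * q - 1) * a s)
      ≤ ∑' n : ℕ, a t * (y ^ (n + 1) / Real.Gamma (((n:ℝ) + 1) * q + 1)) := by
    rw [intervalIntegral.integral_of_le ht0]
    by_cases hInt : IntegrableOn (fun s => ∑' n : ℕ, w ^ (n + 1) / Real.Gamma (((n:ℝ) + 1) * q)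
        * (t - s) ^ (((n + 1 : ℕ) : ℝ) * q - 1) * a s) (Ioc 0 t) volume
    swap
    · rw [MeasureTheory.integral_undef hInt]
      exact tsum_nonneg hVnn
    have h0 : 0 ≤ᵐ[volume.restrict (Ioc (0:ℝ) t)]
        (fun s => ∑' n : ℕ, w ^ (n + 1) / Real.Gamma (((n:ℝ) + 1) * q)
          * (t - s) ^ (((n + 1 : ℕ) : ℝ) * q - 1) * a s) := by
      filter_upwards [hmem] with s hs
      exact tsum_nonneg (hFterm_nn s hs)
    rw [MeasureTheory.integral_eq_lintegral_of_nonneg_ae h0 hInt.1]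
    have ha_meas : AEMeasurable a (volume.restrict (Ioc (0:ℝ) t)) :=
      (aemeasurable_restrict_of_monotoneOn measurableSet_Icc ha_mono).mono_measure
        (Measure.restrict_mono hsubT le_rfl)
    have hFmeas : ∀ n : ℕ, AEMeasurable
        (fun s => w ^ (n + 1) / Real.Gamma (((n:ℝ) + 1) * q)
          * (t - s) ^ (((n + 1 : ℕ) : ℝ) * q - 1) * a s) (volume.restrict (Ioc (0:ℝ) t)) := by
      intro n
      apply AEMeasurable.mul _ ha_meas
      apply Measurable.aemeasurable
      fun_prop
    have hchain : (∫⁻ s in Ioc (0:ℝ) t, ENNReal.ofReal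
        (∑' n : ℕ, w ^ (n + 1) / Real.Gamma (((n:ℝ) + 1) * q)
          * (t - s) ^ (((n + 1 : ℕ) : ℝ) * q - 1) * a s))
        ≤ ENNReal.ofReal (∑' n : ℕ, a t * (y ^ (n + 1) / Real.Gamma (((n:ℝ) + 1) * q + 1))) := by
      calc (∫⁻ s in Ioc (0:ℝ) t, ENNReal.ofReal
          (∑' n : ℕ, w ^ (n + 1) / Real.Gamma (((n:ℝ) + 1) * q)
            * (t - s) ^ (((n + 1 : ℕ) : ℝ) * q - 1) * a s))
          ≤ ∫⁻ s in Ioc (0:ℝ) t, ∑' n : ℕ, ENNReal.ofReal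
              (w ^ (n + 1) / Real.Gamma (((n:ℝ) + 1) * q)
                * (t - s) ^ (((n + 1 : ℕ) : ℝ) * q - 1) * a s) := by
            apply lintegral_mono_ae
            filter_upwards [hmem] with s hs
            by_cases hsf : Summable (fun n : ℕ => w ^ (n + 1) / Real.Gamma (((n:ℝ) + 1) * q)
                * (t - s) ^ (((n + 1 : ℕ) : ℝ) * q - 1) * a s)
            · rw [ENNReal.ofReal_tsum_of_nonneg (hFterm_nn s hs) hsf]
            · rw [tsum_eq_zero_of_not_summable hsf]
              simp
        _ = ∑' n : ℕ, ∫⁻ s in Ioc (0:ℝ) t, ENNReal.ofReal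
              (w ^ (n + 1) / Real.Gamma (((n:ℝ) + 1) * q)
                * (t - s) ^ (((n + 1 : ℕ) : ℝ) * q - 1) * a s) :=
            lintegral_tsum fun n => (ENNReal.measurable_ofReal.comp_aemeasurable (hFmeas n))
        _ ≤ ∑' n : ℕ, ∫⁻ s in Ioc (0:ℝ) t, ENNReal.ofReal
              (w ^ (n + 1) / Real.Gamma (((n:ℝ) + 1) * q)
                * (t - s) ^ (((n + 1 : ℕ) : ℝ) * q - 1) * a t) := by
            refine ENNReal.tsum_le_tsum fun n => lintegral_mono_ae ?_
            filter_upwards [hmem] with s hs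
            apply ENNReal.ofReal_le_ofReal
            apply mul_le_mul_of_nonneg_left (ha_mono (hsubT hs) ⟨ht0, htT⟩ hs.2)
            exact mul_nonneg (div_nonneg (pow_nonneg hw0 _) (hΓp n).le)
              (Real.rpow_nonneg (by linarith [hs.2]) _)
        _ = ∑' n : ℕ, ENNReal.ofReal (a t * (y ^ (n + 1) / Real.Gamma (((n:ℝ) + 1) * q + 1))) := by
            refine tsum_congr fun n => ?_
            rw [← MeasureTheory.ofReal_integral_eq_lintegral_ofReal (hGint n) ?_, hGval n]
            filter_upwards [hmem] with s hs
            exact mul_nonneg (mul_nonneg (div_nonneg (pow_nonneg hw0 _) (hΓp n).le)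
              (Real.rpow_nonneg (by linarith [hs.2]) _)) hat
        _ = ENNReal.ofReal (∑' n : ℕ, a t * (y ^ (n + 1) / Real.Gamma (((n:ℝ) + 1) * q + 1))) :=
            (ENNReal.ofReal_tsum_of_nonneg hVnn hVsum).symm
    calc (∫⁻ s in Ioc (0:ℝ) t, ENNReal.ofReal
        (∑' n : ℕ, w ^ (n + 1) / Real.Gamma (((n:ℝ) + 1) * q)
          * (t - s) ^ (((n + 1 : ℕ) : ℝ) * q - 1) * a s)).toReal
        ≤ (ENNReal.ofReal (∑' n : ℕ, a t * (y ^ (n + 1)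
            / Real.Gamma (((n:ℝ) + 1) * q + 1)))).toReal :=
          ENNReal.toReal_mono ENNReal.ofReal_ne_top hchain
      _ = ∑' n : ℕ, a t * (y ^ (n + 1) / Real.Gamma (((n:ℝ) + 1) * q + 1)) :=
          ENNReal.toReal_ofReal (tsum_nonneg hVnn)
  -- final assembly
  have hml : mittagLeffler q y
      = 1 + ∑' n : ℕ, y ^ (n + 1) / Real.Gamma (((n:ℝ) + 1) * q + 1) := by
    rw [mittagLeffler, Summable.tsum_eq_zero_add hsum]
    congr 1
    · norm_num [Real.Gamma_one]
    · refine tsum_congr fun n => ?_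
      push_cast
      ring_nf
  calc a t + (∫ s in (0:ℝ)..t,
        ∑' n : ℕ, w ^ (n + 1) / Real.Gamma (((n:ℝ) + 1) * q)
          * (t - s) ^ (((n + 1 : ℕ) : ℝ) * q - 1) * a s)
      ≤ a t + ∑' n : ℕ, a t * (y ^ (n + 1) / Real.Gamma (((n:ℝ) + 1) * q + 1)) := by
        linarith [key]
    _ = a t * mittagLeffler q y := by
        rw [hml, mul_add, mul_one, tsum_mul_left]
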